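/- Let k be a positive integer, α ∈ (0,1], x₀ ∈ ℝ, and d > 0. Let v ∈ C^k((x₀-d, x₀+d)) be such that v does not change sign on (x₀-d, x₀+d) and v' does not change sign on (x₀-d, x₀+d), and such that v^{(k)} is α-Hölder continuous on (x₀-d, x₀+d) with constant H. Then there exists a constant C(k), depending only on k, such that |v'(x₀)|^{k+α} ≤ C(k) · |v(x₀)|^{k+α-1} · max{ H, |v'(x₀)| / d^{k+α-1} }. -/

import Mathlib

open Set Polynomial

theorem markov_aux (k : ℕ) : ∃ C : ℝ, 1 ≤ C ∧ ∀ P : Polynomial ℝ, P.natDegree ≤ k →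
    ∀ A : ℝ, (∀ t ∈ Icc (0:ℝ) 1, |P.eval t| ≤ A) → |P.derivative.eval 0| ≤ C * A := by
  haveI : FiniteDimensional ℝ (Polynomial.degreeLT ℝ (k+1)) :=
    (Polynomial.degreeLTEquiv ℝ (k+1)).symm.finiteDimensional
  let T : Polynomial.degreeLT ℝ (k+1) →ₗ[ℝ] C(Set.Icc (0:ℝ) 1, ℝ) :=
    { toFun := fun P => ⟨fun t => P.1.eval t.1, P.1.continuous_aeval.comp continuous_subtype_val⟩
      map_add' := fun P Q => by ext t; simp; rfl
      map_smul' := fun c P => by ext t; simp; left; rfl }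
  have hinj : Function.Injective T := by
    intro P Q h
    have h' : ∀ t ∈ Icc (0:ℝ) 1, (P.1 - Q.1).eval t = 0 := by
      intro t ht
      have := congrArg (fun f => f.toFun ⟨t, ht⟩) h
      simp only [T] at this
      simp only [Polynomial.eval_sub]
      exact sub_eq_zero.mpr this
    have hz : (P.1 - Q.1) = 0 := by
      apply Polynomial.eq_zero_of_infinite_isRoot
      exact Set.Infinite.mono (fun x hx => h' x hx) (Set.Icc_infinite (h := by norm_num))
    exact Subtype.ext (sub_eq_zero.mp hz)
  let e := LinearEquiv.ofInjective T hinj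
  let ψ : Polynomial.degreeLT ℝ (k+1) →ₗ[ℝ] ℝ :=
    (Polynomial.leval 0).comp (Polynomial.derivative.comp (Polynomial.degreeLT ℝ (k+1)).subtype)
  let φ : (LinearMap.range T) →ₗ[ℝ] ℝ := ψ.comp e.symm.toLinearMap
  let φ' : @ContinuousLinearMap ℝ ℝ _ _ (RingHom.id ℝ) (LinearMap.range T) (PseudoMetricSpace.toUniformSpace.toTopologicalSpace) SeminormedAddCommGroup.toAddCommGroup.toAddCommMonoid ℝ _ _ NormedSpace.toModule _ := ⟨φ, φ.continuous_of_finiteDimensional⟩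
  refine ⟨max ‖φ'‖ 1, le_max_right _ _, ?_⟩
  intro P hP A hA
  have hA0 : 0 ≤ A := le_trans (abs_nonneg _) (hA 0 ⟨le_refl _, zero_le_one⟩)
  have hPm : P ∈ Polynomial.degreeLT ℝ (k+1) := by
    rw [Polynomial.mem_degreeLT]
    exact lt_of_le_of_lt Polynomial.degree_le_natDegree (by exact_mod_cast Nat.lt_succ_of_le hP)
  have key := φ'.le_opNorm (e ⟨P, hPm⟩)
  have h1 : φ' (e ⟨P, hPm⟩) = P.derivative.eval 0 := by
    show φ (e ⟨P, hPm⟩) = _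
    simp only [φ, LinearMap.comp_apply, LinearEquiv.coe_toLinearMap,
      LinearEquiv.symm_apply_apply]
    simp [ψ]
  have h2 : ‖e ⟨P, hPm⟩‖ ≤ A := by
    rw [← Submodule.norm_coe, LinearEquiv.ofInjective_apply]
    rw [ContinuousMap.norm_le _ hA0]
    intro t
    exact (hA t.1 t.2).trans_eq' (by simp [T, Real.norm_eq_abs]; rfl)
  calc |P.derivative.eval 0| = ‖φ' (e ⟨P, hPm⟩)‖ := by rw [h1]; rfl
    _ ≤ ‖φ'‖ * ‖e ⟨P, hPm⟩‖ := key
    _ ≤ ‖φ'‖ * A := mul_le_mul_of_nonneg_left h2 (ContinuousLinearMap.opNorm_nonneg _)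
    _ ≤ max ‖φ'‖ 1 * A := mul_le_mul_of_nonneg_right (le_max_left _ _) hA0

theorem markov_scaled (k : ℕ) : ∃ C : ℝ, 1 ≤ C ∧ ∀ P : Polynomial ℝ, P.natDegree ≤ k →
    ∀ r A c : ℝ, 0 < r → |c| = r →
    (∀ t ∈ Icc (0:ℝ) 1, |P.eval (c * t)| ≤ A) → |P.derivative.eval 0| * r ≤ C * A := by
  obtain ⟨C, hC1, hC⟩ := markov_aux k
  refine ⟨C, hC1, ?_⟩
  intro P hP r A c hr hc hA
  set Q : Polynomial ℝ := P.comp (Polynomial.C c * Polynomial.X) with hQ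
  have hQdeg : Q.natDegree ≤ k := by
    rw [hQ, Polynomial.natDegree_comp]
    calc P.natDegree * (Polynomial.C c * Polynomial.X).natDegree
        ≤ k * 1 := Nat.mul_le_mul hP (le_trans (Polynomial.natDegree_C_mul_le _ _) (by simp))
      _ = k := by ring
  have hQA : ∀ t ∈ Icc (0:ℝ) 1, |Q.eval t| ≤ A := by
    intro t ht
    rw [hQ, Polynomial.eval_comp]
    simpa using hA t ht
  have := hC Q hQdeg A hQA
  have hQd : Q.derivative.eval 0 = c * P.derivative.eval 0 := by
    rw [hQ, Polynomial.derivative_comp]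
    simp
  rw [hQd, abs_mul, hc, mul_comm] at this
  linarith [this]

set_option maxHeartbeats 1000000 in
theorem higher_order_glaeser_in_interval (k : ℕ) (hk : 0 < k) :
    ∃ C : ℝ, ∀ α : ℝ, α ∈ Set.Ioc (0 : ℝ) 1 → ∀ x₀ d : ℝ, 0 < d →
      ∀ v : ℝ → ℝ,
      ContDiffOn ℝ (k : ℕ∞) v (Ioo (x₀ - d) (x₀ + d)) →
      ((∀ x ∈ Ioo (x₀ - d) (x₀ + d), 0 ≤ v x) ∨
        (∀ x ∈ Ioo (x₀ - d) (x₀ + d), v x ≤ 0)) →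
      ((∀ x ∈ Ioo (x₀ - d) (x₀ + d), 0 ≤ derivWithin v (Ioo (x₀ - d) (x₀ + d)) x) ∨
        (∀ x ∈ Ioo (x₀ - d) (x₀ + d), derivWithin v (Ioo (x₀ - d) (x₀ + d)) x ≤ 0)) →
      ∀ H : ℝ, 0 ≤ H →
      (∀ x ∈ Ioo (x₀ - d) (x₀ + d), ∀ y ∈ Ioo (x₀ - d) (x₀ + d),
        |iteratedDerivWithin k v (Ioo (x₀ - d) (x₀ + d)) y -
          iteratedDerivWithin k v (Ioo (x₀ - d) (x₀ + d)) x| ≤ H * |y - x| ^ α) →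
      |derivWithin v (Ioo (x₀ - d) (x₀ + d)) x₀| ^ ((k : ℝ) + α) ≤
        C * |v x₀| ^ ((k : ℝ) + α - 1) *
          max H (|derivWithin v (Ioo (x₀ - d) (x₀ + d)) x₀| / d ^ ((k : ℝ) + α - 1)) := by
  obtain ⟨C₀, hC₀1, hC₀⟩ := markov_scaled k
  have hC₀pos : 0 < C₀ := lt_of_lt_of_le one_pos hC₀1
  refine ⟨(4*C₀)^(k+1), ?_⟩
  intro α hα x₀ d hd v hv hsgn hsgn' H hH hHold
  obtain ⟨hα0, hα1⟩ := hα
  set U := Ioo (x₀ - d) (x₀ + d) with hU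
  have hUopen : IsOpen U := isOpen_Ioo
  have hUuniq : UniqueDiffOn ℝ U := hUopen.uniqueDiffOn
  have hx₀U : x₀ ∈ U := by constructor <;> [linarith; linarith]
  set g : ℕ → ℝ → ℝ := fun m => iteratedDerivWithin m v U with hg
  set p := derivWithin v U x₀ with hp
  have hgp : g 1 x₀ = p := congrFun iteratedDerivWithin_one x₀
  -- Taylor polynomials
  set Pm : ℕ → Polynomial ℝ := fun m =>
    ∑ i ∈ Finset.range (k - m + 1), Polynomial.C (g (m+i) x₀ / i.factorial) * Polynomial.X ^ i
    with hPm
  have hPmeval0 : ∀ m, (Pm m).eval 0 = g m x₀ := by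
    intro m
    rw [hPm]
    simp only [Polynomial.eval_finset_sum, Polynomial.eval_mul, Polynomial.eval_pow,
      Polynomial.eval_C, Polynomial.eval_X]
    rw [Finset.sum_eq_single 0]
    · simp
    · intro i _ hi; simp [zero_pow hi]
    · intro h; simp at h
  have hPmdeg : ∀ m, (Pm m).natDegree ≤ k - m := by
    intro m
    apply Polynomial.natDegree_sum_le_of_forall_le
    intro i hi
    refine le_trans (Polynomial.natDegree_C_mul_le _ _) ?_
    simp only [Polynomial.natDegree_X_pow]
    exact Nat.lt_succ_iff.mp (Finset.mem_range.mp hi)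
  -- derivative of Taylor polynomial
  have hPmder : ∀ m' m : ℕ, m = m' + 1 → m ≤ k → (Pm m').derivative = Pm m := by
    intro m' m hm hmk
    have hkm : k - m' = (k - m) + 1 := by omega
    rw [hPm]
    simp only [hkm]
    rw [map_sum]
    rw [Finset.sum_range_succ']
    simp only [Polynomial.derivative_C_mul_X_pow]
    simp only [Nat.cast_zero, mul_zero, map_zero, zero_mul, add_zero, Nat.add_sub_cancel]
    apply Finset.sum_congr rfl
    intro i _
    congr 1
    rw [show m' + (i+1) = m + i from by omega, Nat.factorial_succ]
    have h1 : ((i:ℝ)+1) ≠ 0 := by positivity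
    have h2 : ((i.factorial : ℕ):ℝ) ≠ 0 := by exact_mod_cast i.factorial_ne_zero
    push_cast
    field_simp
  -- Taylor estimate
  have hTaylor : ∀ r : ℝ, 0 < r → r ≤ d/2 → ∀ j, j ≤ k → ∀ y ∈ Icc (x₀ - r) (x₀ + r),
      |g (k-j) y - (Pm (k-j)).eval (y - x₀)| ≤ H * r ^ α * r ^ j := by
    intro r hr hrd
    have hIccU : Icc (x₀ - r) (x₀ + r) ⊆ U := by
      intro y hy
      rcases hy with ⟨h1, h2⟩
      simp only [hU, mem_Ioo]
      constructor <;> linarith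
    have hx₀I : x₀ ∈ Icc (x₀ - r) (x₀ + r) := ⟨by linarith, by linarith⟩
    have hrα : 0 ≤ H * r ^ α := mul_nonneg hH (Real.rpow_nonneg hr.le α)
    intro j
    induction j with
    | zero =>
      intro _ y hy
      have hyU := hIccU hy
      have hbase : (Pm k).eval (y - x₀) = g k x₀ := by
        rw [hPm]
        simp [Nat.sub_self, Finset.sum_range_one]
      rw [Nat.sub_zero, hbase, pow_zero, mul_one]
      refine le_trans (hHold x₀ hx₀U y hyU) ?_
      refine mul_le_mul_of_nonneg_left ?_ hH
      refine Real.rpow_le_rpow (abs_nonneg _) ?_ hα0.le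
      rw [abs_le]
      rcases hy with ⟨h1, h2⟩
      constructor <;> linarith
    | succ j ih =>
      intro hj y hy
      have hjk : j ≤ k := by omega
      set m' := k - (j+1) with hm'
      have hmeq : k - j = m' + 1 := by omega
      have hm'k : m' < k := by omega
      have hdiffm' : DifferentiableOn ℝ (g m') U :=
        hv.differentiableOn_iteratedDerivWithin (by exact_mod_cast hm'k) hUuniq
      have hderiv : ∀ z ∈ Icc (x₀ - r) (x₀ + r),
          HasDerivWithinAt (fun w => g m' w - (Pm m').eval (w - x₀))
            (g (k-j) z - (Pm (k-j)).eval (z - x₀)) (Icc (x₀ - r) (x₀ + r)) z := by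
        intro z hz
        have hzU := hIccU hz
        have h1 : HasDerivWithinAt (g m') (g (k-j) z) U z := by
          have h0 := (hdiffm' z hzU).hasDerivWithinAt
          rw [← iteratedDerivWithin_succ] at h0
          rwa [hmeq]
        have h2 : HasDerivAt (fun w => (Pm m').eval (w - x₀)) ((Pm (k-j)).eval (z - x₀)) z := by
          have hc := ((Pm m').hasDerivAt (z - x₀)).comp z ((hasDerivAt_id z).sub_const x₀)
          rw [hPmder m' (k-j) hmeq (Nat.sub_le k j)] at hc
          simpa [Function.comp_def] using hc
        exact (h1.mono hIccU).sub h2.hasDerivWithinAt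
      have hbound : ∀ z ∈ Icc (x₀ - r) (x₀ + r),
          ‖g (k-j) z - (Pm (k-j)).eval (z - x₀)‖ ≤ H * r ^ α * r ^ j := by
        intro z hz
        rw [Real.norm_eq_abs]
        exact ih hjk z hz
      have hmvt := Convex.norm_image_sub_le_of_norm_hasDerivWithin_le hderiv hbound
        (convex_Icc _ _) hx₀I hy
      have hΦ0 : g m' x₀ - (Pm m').eval (x₀ - x₀) = 0 := by
        rw [sub_self, hPmeval0, sub_self]
      rw [hΦ0, sub_zero, Real.norm_eq_abs] at hmvt
      have hyr : ‖y - x₀‖ ≤ r := by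
        rw [Real.norm_eq_abs, abs_le]
        rcases hy with ⟨h1, h2⟩
        constructor <;> linarith
      calc |g m' y - (Pm m').eval (y - x₀)| ≤ (H * r ^ α * r ^ j) * ‖y - x₀‖ := hmvt
        _ ≤ (H * r ^ α * r ^ j) * r := by
            refine mul_le_mul_of_nonneg_left hyr ?_
            exact mul_nonneg hrα (pow_nonneg hr.le j)
        _ = H * r ^ α * r ^ (j+1) := by ring
  have hg0 : g 0 = v := iteratedDerivWithin_zero
  -- monotonicity
  have hintU : interior U = U := hUopen.interior_eq
  have hcont : ContinuousOn v U := hv.continuousOn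
  have hone : (1 : ℕ∞) ≤ (k : ℕ∞) := by exact_mod_cast hk
  have hdiffv : DifferentiableOn ℝ v U := hv.differentiableOn (by exact_mod_cast hk.ne')
  have hmono : MonotoneOn v U ∨ AntitoneOn v U := by
    rcases hsgn' with h | h
    · left
      apply monotoneOn_of_deriv_nonneg (convex_Ioo _ _) hcont (by rw [hintU]; exact hdiffv)
      intro x hx
      rw [hintU] at hx
      rw [← derivWithin_of_isOpen hUopen hx]
      exact h x hx
    · right
      apply antitoneOn_of_deriv_nonpos (convex_Ioo _ _) hcont (by rw [hintU]; exact hdiffv)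
      intro x hx
      rw [hintU] at hx
      rw [← derivWithin_of_isOpen hUopen hx]
      exact h x hx
  have hside : (∀ y ∈ U, y ≤ x₀ → |v y| ≤ |v x₀|) ∨ (∀ y ∈ U, x₀ ≤ y → |v y| ≤ |v x₀|) := by
    rcases hsgn with hpos | hneg <;> rcases hmono with hm | hm
    · left; intro y hyU hyx
      rw [abs_of_nonneg (hpos y hyU), abs_of_nonneg (hpos x₀ hx₀U)]
      exact hm hyU hx₀U hyx
    · right; intro y hyU hxy
      rw [abs_of_nonneg (hpos y hyU), abs_of_nonneg (hpos x₀ hx₀U)]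
      exact hm hx₀U hyU hxy
    · right; intro y hyU hxy
      rw [abs_of_nonpos (hneg y hyU), abs_of_nonpos (hneg x₀ hx₀U)]
      exact neg_le_neg (hm hx₀U hyU hxy)
    · left; intro y hyU hyx
      rw [abs_of_nonpos (hneg y hyU), abs_of_nonpos (hneg x₀ hx₀U)]
      exact neg_le_neg (hm hyU hx₀U hyx)
  -- key bound
  have hKB : ∀ r : ℝ, 0 < r → r ≤ d/2 → |p| * r ≤ C₀ * (|v x₀| + H * r ^ α * r ^ k) := by
    intro r hr hrd
    have hIccU : Icc (x₀ - r) (x₀ + r) ⊆ U := by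
      intro y hy
      rcases hy with ⟨h1, h2⟩
      simp only [hU, mem_Ioo]
      constructor <;> linarith
    set A := |v x₀| + H * r ^ α * r ^ k with hA
    have hPdeg : (Pm 0).natDegree ≤ k := le_trans (hPmdeg 0) (by omega)
    have hPd0 : (Pm 0).derivative.eval 0 = p := by
      rw [hPmder 0 1 rfl hk, hPmeval0, hgp]
    have hT := hTaylor r hr hrd k le_rfl
    rw [Nat.sub_self] at hT
    have hmemIcc : ∀ c : ℝ, |c| = r → ∀ t ∈ Icc (0:ℝ) 1,
        x₀ + c * t ∈ Icc (x₀ - r) (x₀ + r) := by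
      intro c hc t ht
      have habs : |c * t| ≤ r := by
        rw [abs_mul, hc, abs_of_nonneg ht.1]
        nlinarith [ht.2, hr]
      rw [abs_le] at habs
      simp only [mem_Icc]
      constructor <;> linarith [habs.1, habs.2]
    have main : ∀ c : ℝ, |c| = r → (∀ t ∈ Icc (0:ℝ) 1, |v (x₀ + c * t)| ≤ |v x₀|) →
        |p| * r ≤ C₀ * A := by
      intro c hc hcv
      have heval : ∀ t ∈ Icc (0:ℝ) 1, |(Pm 0).eval (c * t)| ≤ A := by
        intro t ht
        have hmem := hmemIcc c hc t ht
        have hTy := hT (x₀ + c * t) hmem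
        rw [hg0, add_sub_cancel_left] at hTy
        have hvb := hcv t ht
        calc |(Pm 0).eval (c * t)|
            = |v (x₀ + c*t) + ((Pm 0).eval (c*t) - v (x₀ + c*t))| := by ring_nf
          _ ≤ |v (x₀ + c*t)| + |(Pm 0).eval (c*t) - v (x₀ + c*t)| := abs_add_le _ _
          _ = |v (x₀ + c*t)| + |v (x₀ + c*t) - (Pm 0).eval (c*t)| := by rw [abs_sub_comm]
          _ ≤ |v x₀| + H * r ^ α * r ^ k := add_le_add hvb hTy
      have := hC₀ (Pm 0) hPdeg r A c hr hc heval
      rwa [hPd0] at this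
    rcases hside with hs | hs
    · refine main (-r) (by rw [abs_neg, abs_of_pos hr]) ?_
      intro t ht
      refine hs _ (hIccU (hmemIcc (-r) (by rw [abs_neg, abs_of_pos hr]) t ht)) ?_
      nlinarith [ht.1, ht.2, hr]
    · refine main r (abs_of_pos hr) ?_
      intro t ht
      refine hs _ (hIccU (hmemIcc r (abs_of_pos hr) t ht)) ?_
      nlinarith [ht.1, ht.2, hr]
  -- final optimization
  set K := (k:ℝ) + α with hKdef
  set f₀ := |v x₀| with hf₀def
  have hk1 : (1:ℝ) ≤ (k:ℝ) := by exact_mod_cast hk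
  have hK0 : 0 < K := by rw [hKdef]; linarith
  have hK1 : 1 < K := by rw [hKdef]; linarith
  have hKk1 : K ≤ (k:ℝ) + 1 := by rw [hKdef]; linarith
  have hf₀nn : 0 ≤ f₀ := abs_nonneg _
  set M := max H (|p| / d ^ (K - 1)) with hMdef
  have hM0 : 0 ≤ M := le_trans hH (le_max_left _ _)
  have hC4 : (1:ℝ) ≤ 4*C₀ := by linarith
  have hCnat : ((4*C₀)^(k+1) : ℝ) = (4*C₀) ^ ((k:ℝ)+1) := by
    rw [← Real.rpow_natCast (4*C₀) (k+1)]
    push_cast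
    ring_nf
  rw [hCnat]
  have hrArith : ∀ r : ℝ, 0 < r → r ^ α * r ^ k = r ^ K := by
    intro r hr
    rw [← Real.rpow_natCast r k, ← Real.rpow_add hr]
    congr 1
    rw [hKdef]; ring
  have hKsplit : ∀ r : ℝ, 0 < r → r ^ K = r ^ (K-1) * r := by
    intro r hr
    have h := Real.rpow_add_one (ne_of_gt hr) (K-1)
    rw [sub_add_cancel] at h
    rw [h]
  by_cases hp0 : p = 0
  · rw [hp0, abs_zero, Real.zero_rpow (ne_of_gt hK0)]
    exact mul_nonneg (mul_nonneg (Real.rpow_nonneg (by linarith) _)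
      (Real.rpow_nonneg hf₀nn _)) hM0
  have hpp : 0 < |p| := abs_pos.mpr hp0
  by_cases hf0 : f₀ = 0
  · exfalso
    by_cases hH0 : H = 0
    · have hkb := hKB (d/2) (by linarith) le_rfl
      rw [hf0, hH0] at hkb
      simp only [zero_mul, add_zero, mul_zero] at hkb
      nlinarith [hkb, hpp, hd]
    · have hHpos : 0 < H := lt_of_le_of_ne hH (Ne.symm hH0)
      set r := min (d/2) ((|p|/(2*C₀*H)) ^ (K-1)⁻¹) with hrdef
      have hr2 : (0:ℝ) < (|p|/(2*C₀*H)) ^ (K-1)⁻¹ := Real.rpow_pos_of_pos (by positivity) _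
      have hr : 0 < r := lt_min (by linarith) hr2
      have hrd : r ≤ d/2 := min_le_left _ _
      have hkb := hKB r hr hrd
      rw [hf0] at hkb
      have h2 : |p| ≤ C₀ * H * r ^ (K-1) := by
        refine le_of_mul_le_mul_right ?_ hr
        calc |p| * r ≤ C₀ * (0 + H * r ^ α * r ^ k) := hkb
          _ = C₀ * (H * (r ^ α * r ^ k)) := by ring
          _ = C₀ * (H * r ^ K) := by rw [hrArith r hr]
          _ = (C₀ * H * r ^ (K-1)) * r := by rw [hKsplit r hr]; ring
      have h3 : r ^ (K-1) ≤ |p|/(2*C₀*H) := by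
        calc r ^ (K-1) ≤ ((|p|/(2*C₀*H)) ^ (K-1)⁻¹) ^ (K-1) :=
              Real.rpow_le_rpow hr.le (min_le_right _ _) (by linarith)
          _ = |p|/(2*C₀*H) := Real.rpow_inv_rpow (by positivity) (by linarith)
      have h4 : |p| ≤ |p|/2 := by
        calc |p| ≤ C₀ * H * r ^ (K-1) := h2
          _ ≤ C₀ * H * (|p|/(2*C₀*H)) := mul_le_mul_of_nonneg_left h3 (by positivity)
          _ = |p|/2 := by field_simp
      linarith
  have hf0' : 0 < f₀ := lt_of_le_of_ne hf₀nn (Ne.symm hf0)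
  by_cases hcase : 0 < H ∧ (f₀/H) ^ K⁻¹ ≤ d/2
  · obtain ⟨hHpos, hrd⟩ := hcase
    set r := (f₀/H) ^ K⁻¹ with hrdef
    have hr : 0 < r := Real.rpow_pos_of_pos (by positivity) _
    have hrK : r ^ K = f₀ / H := Real.rpow_inv_rpow (by positivity) hK0.ne'
    have hkb := hKB r hr hrd
    have hHr : H * (f₀ / H) = f₀ := by field_simp
    have h2 : |p| * r ≤ 2*C₀*f₀ := by
      calc |p| * r ≤ C₀ * (f₀ + H * r ^ α * r ^ k) := hkb
        _ = C₀ * (f₀ + H * (r ^ α * r ^ k)) := by ring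
        _ = C₀ * (f₀ + H * r ^ K) := by rw [hrArith r hr]
        _ = C₀ * (f₀ + f₀) := by rw [hrK, hHr]
        _ = 2*C₀*f₀ := by ring
    have h3 : (|p| * r) ^ K ≤ (2*C₀*f₀) ^ K :=
      Real.rpow_le_rpow (mul_nonneg (abs_nonneg p) hr.le) h2 hK0.le
    rw [Real.mul_rpow (abs_nonneg p) hr.le, hrK,
      Real.mul_rpow (by positivity) hf0'.le] at h3
    have hfK : f₀ ^ K = f₀ ^ (K-1) * f₀ := by
      rw [← Real.rpow_add_one (ne_of_gt hf0') (K-1)]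
      congr 1
      ring
    have h4 : |p| ^ K ≤ (2*C₀)^K * f₀^(K-1) * H := by
      have e1 : |p| ^ K = (|p| ^ K * (f₀ / H)) * (H / f₀) := by field_simp
      rw [e1]
      calc (|p| ^ K * (f₀ / H)) * (H / f₀) ≤ ((2*C₀)^K * f₀^K) * (H / f₀) :=
            mul_le_mul_of_nonneg_right h3 (by positivity)
        _ = (2*C₀)^K * f₀^(K-1) * H := by rw [hfK]; field_simp
    have hb1 : (2*C₀)^K ≤ (4*C₀) ^ ((k:ℝ)+1) := by
      calc (2*C₀)^K ≤ (2*C₀) ^ ((k:ℝ)+1) :=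
            Real.rpow_le_rpow_of_exponent_le (by linarith) hKk1
        _ ≤ (4*C₀) ^ ((k:ℝ)+1) := Real.rpow_le_rpow (by linarith) (by linarith) (by linarith)
    calc |p| ^ K ≤ (2*C₀)^K * f₀^(K-1) * H := h4
      _ ≤ (4*C₀) ^ ((k:ℝ)+1) * f₀^(K-1) * M := by
          refine mul_le_mul ?_ (le_max_left _ _) hH ?_
          · exact mul_le_mul_of_nonneg_right hb1 (Real.rpow_nonneg hf₀nn _)
          · positivity
  · push_neg at hcase
    have hHd : H * (d/2) ^ K ≤ f₀ := by
      by_cases hH0 : H = 0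
      · rw [hH0, zero_mul]; exact hf0'.le
      · have hHpos : 0 < H := lt_of_le_of_ne hH (Ne.symm hH0)
        have hlt : d/2 < (f₀/H) ^ K⁻¹ := hcase hHpos
        have hlt2 : (d/2) ^ K < ((f₀/H) ^ K⁻¹) ^ K := Real.rpow_lt_rpow (by linarith) hlt hK0
        rw [Real.rpow_inv_rpow (by positivity) hK0.ne'] at hlt2
        calc H * (d/2)^K ≤ H * (f₀/H) := mul_le_mul_of_nonneg_left hlt2.le hH
          _ = f₀ := by field_simp
    have hr : (0:ℝ) < d/2 := by linarith
    have hkb := hKB (d/2) hr le_rfl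
    have e : H * (d/2) ^ α * (d/2) ^ k = H * (d/2) ^ K := by
      rw [mul_assoc, hrArith (d/2) hr]
    rw [e] at hkb
    have h2 : |p| * (d/2) ≤ 2*C₀*f₀ := by nlinarith [hkb, hHd, hC₀pos]
    have h5 : |p| ≤ 4*C₀*f₀/d := by
      rw [le_div_iff₀ hd]
      linarith
    have h6 : |p| ^ (K-1) ≤ (4*C₀*f₀/d) ^ (K-1) :=
      Real.rpow_le_rpow (abs_nonneg p) h5 (by linarith)
    have h7 : |p| ^ K = |p| ^ (K-1) * |p| := by
      rw [← Real.rpow_add_one (abs_ne_zero.mpr hp0) (K-1)]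
      congr 1
      ring
    rw [h7]
    have hb1 : (4*C₀)^(K-1) ≤ (4*C₀) ^ ((k:ℝ)+1) :=
      Real.rpow_le_rpow_of_exponent_le hC4 (by linarith)
    calc |p| ^ (K-1) * |p| ≤ (4*C₀*f₀/d)^(K-1) * |p| :=
          mul_le_mul_of_nonneg_right h6 (abs_nonneg p)
      _ = (4*C₀)^(K-1) * f₀^(K-1) * (|p| / d^(K-1)) := by
          rw [Real.div_rpow (by positivity) hd.le, Real.mul_rpow (by positivity) hf0'.le]
          ring
      _ ≤ (4*C₀) ^ ((k:ℝ)+1) * f₀^(K-1) * M := by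
          refine mul_le_mul ?_ (le_max_right _ _) (by positivity) (by positivity)
          exact mul_le_mul_of_nonneg_right hb1 (Real.rpow_nonneg hf₀nn _)
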